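/- Let ℓ be a prime, r ≥ 1, d ≥ 1 with gcd(d, ℓ) = 1, N = d·ℓʳ − 1, and let M = ℤ_ℓ^m be a finite free ℤ_ℓ-module. Let Φ : M^N → M^N be given by Φ(α)_t = α_{t−1} − 2α_t + α_{t+1} (with α₀ = α_{N+1} = 0). Then coker(Φ) ≅ (ℤ/ℓʳ)^m. -/
import Mathlib


/-- For `N = d·ℓʳ − 1` with `gcd(d, ℓ) = 1` and `M = ℤ_ℓ^m`, the cokernel of the
tridiagonal map `Φ` on `M^N` is isomorphic to `(ℤ/ℓʳ)^m`. -/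
theorem coker_discrete_laplacian (ℓ : ℕ) [Fact ℓ.Prime] (r d m : ℕ) (hr : 1 ≤ r)
    (hd : 1 ≤ d) (hcop : ¬ ℓ ∣ d) (N : ℕ) (hN : N = d * ℓ ^ r - 1)
    (e : (Fin N → (Fin m → ℤ_[ℓ])) → ℕ → (Fin m → ℤ_[ℓ]))
    (he : ∀ α j, e α j = if h : 1 ≤ j ∧ j ≤ N then α ⟨j - 1, by omega⟩ else 0)
    (Φ : (Fin N → (Fin m → ℤ_[ℓ])) →ₗ[ℤ_[ℓ]] (Fin N → (Fin m → ℤ_[ℓ])))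
    (hΦ : ∀ α t, Φ α t = e α t.1 - 2 • e α (t.1 + 1) + e α (t.1 + 2)) :
    Nonempty (((Fin N → (Fin m → ℤ_[ℓ])) ⧸ LinearMap.range Φ) ≃+
      (Fin m → ZMod (ℓ ^ r))) := by
  have hp : ℓ.Prime := Fact.out
  have hl2 : 2 ≤ ℓ := hp.two_le
  have hlr : ℓ ≤ ℓ ^ r := Nat.le_self_pow (by omega) ℓ
  have hN1 : N + 1 = d * ℓ ^ r := by
    have h1 : 1 ≤ d * ℓ ^ r := Nat.one_le_iff_ne_zero.mpr (by positivity)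
    omega
  have hN0 : 0 < N := by nlinarith
  set φ : ℤ_[ℓ] →+* ZMod (ℓ ^ r) := PadicInt.toZModPow r with hφ
  letI : Algebra ℤ_[ℓ] (ZMod (ℓ ^ r)) := φ.toAlgebra
  have hsmul : ∀ (c : ℤ_[ℓ]) (x : ZMod (ℓ ^ r)), c • x = φ c * x := fun c x => rfl
  -- the projection map
  set π : (Fin N → (Fin m → ℤ_[ℓ])) →ₗ[ℤ_[ℓ]] (Fin m → ZMod (ℓ ^ r)) :=
    { toFun := fun α i => ∑ t : Fin N, ((t.1 + 1 : ℕ) : ZMod (ℓ ^ r)) * φ (α t i)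
      map_add' := by
        intro a b; funext i
        simp [mul_add, Finset.sum_add_distrib]
      map_smul' := by
        intro c a; funext i
        simp only [Pi.smul_apply, smul_eq_mul, map_mul, RingHom.id_apply, hsmul,
          Finset.mul_sum]
        exact Finset.sum_congr rfl fun t _ => by ring } with hπ
  have hπ_apply : ∀ α i, π α i = ∑ t : Fin N, ((t.1 + 1 : ℕ) : ZMod (ℓ ^ r)) * φ (α t i) :=
    fun α i => rfl
  -- boundary values of e
  have he0 : ∀ α, e α 0 = 0 := by intro α; rw [he]; simp
  have heN1 : ∀ α, e α (N + 1) = 0 := by intro α; rw [he]; simp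
  -- range Φ ≤ ker π
  have hrange : LinearMap.range Φ ≤ LinearMap.ker π := by
    rintro _ ⟨α, rfl⟩
    rw [LinearMap.mem_ker]
    funext i
    rw [hπ_apply]
    set F : ℕ → ZMod (ℓ ^ r) := fun j => φ (e α j i) with hF
    set g : ℕ → ZMod (ℓ ^ r) :=
      fun j => (j : ZMod (ℓ ^ r)) * F (j + 1) - ((j + 1 : ℕ) : ZMod (ℓ ^ r)) * F j with hg
    have hterm : ∀ t : Fin N,
        ((t.1 + 1 : ℕ) : ZMod (ℓ ^ r)) * φ ((Φ α) t i) = g (t.1 + 1) - g t.1 := by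
      intro t
      have h1 := congrFun (hΦ α t) i
      simp only [Pi.add_apply, Pi.sub_apply, Pi.smul_apply] at h1
      have hg1 : ∀ j : ℕ, g j = (j : ZMod (ℓ ^ r)) * F (j + 1)
          - ((j + 1 : ℕ) : ZMod (ℓ ^ r)) * F j := fun j => rfl
      have hF1 : ∀ j : ℕ, φ (e α j i) = F j := fun j => rfl
      rw [h1, hg1, hg1]
      have h2s : (2 : ℕ) • e α (↑t + 1) i = 2 * e α (↑t + 1) i := by
        simp [two_smul, two_mul]
      rw [h2s]
      simp only [map_add, map_sub, map_mul, map_ofNat, hF1]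
      push_cast
      ring
    rw [Finset.sum_congr rfl fun t _ => hterm t]
    rw [Fin.sum_univ_eq_sum_range (fun k => g (k + 1) - g k) N]
    rw [Finset.sum_range_sub g N]
    have hF0 : F 0 = 0 := by rw [hF]; simp [he0 α]
    have hFN1 : F (N + 1) = 0 := by rw [hF]; simp [heN1 α]
    have hNcast : ((N + 1 : ℕ) : ZMod (ℓ ^ r)) = 0 := by
      rw [hN1]; simp [ZMod.natCast_self]
    have hgN : g N = 0 := by simp only [hg]; rw [hFN1, hNcast]; ring
    have hg0 : g 0 = 0 := by simp only [hg]; rw [hF0]; simp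
    rw [hgN, hg0]
    simp
  -- surjectivity of π
  have hsurjπ : Function.Surjective π := by
    intro y
    haveI : NeZero (ℓ ^ r) := ⟨by positivity⟩
    set x : Fin N → Fin m → ℤ_[ℓ] :=
      fun t => if t = (⟨0, hN0⟩ : Fin N) then (fun i => ((y i).val : ℤ_[ℓ])) else 0 with hx
    refine ⟨x, ?_⟩
    funext i
    rw [hπ_apply]
    rw [Finset.sum_eq_single (⟨0, hN0⟩ : Fin N)]
    · have h7 : x ⟨0, hN0⟩ i = (((y i).val : ℕ) : ℤ_[ℓ]) := by simp [hx]
      rw [h7, map_natCast, ZMod.natCast_val, ZMod.cast_id]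
      simp
    · intro s _ hs
      have h8 : x s i = 0 := by simp [hx, hs]
      rw [h8, map_zero, mul_zero]
    · intro h; exact absurd (Finset.mem_univ _) h
  -- ker π ≤ range Φ
  have hker : LinearMap.ker π ≤ LinearMap.range Φ := by
    intro α hα
    rw [LinearMap.mem_ker] at hα
    have hA : ∀ i, ∃ c : ℤ_[ℓ], (∑ t : Fin N, ((t.1 + 1 : ℕ) : ℤ_[ℓ]) * α t i)
        = ((ℓ : ℤ_[ℓ]) ^ r) * c := by
      intro i
      have h1 : φ (∑ t : Fin N, ((t.1 + 1 : ℕ) : ℤ_[ℓ]) * α t i) = 0 := by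
        rw [map_sum]
        have h2 : ∑ t : Fin N, φ (((t.1 + 1 : ℕ) : ℤ_[ℓ]) * α t i) = π α i := by
          rw [hπ_apply]
          exact Finset.sum_congr rfl fun t _ => by rw [map_mul, map_natCast]
        rw [h2, hα]
        rfl
      have h2 : (∑ t : Fin N, ((t.1 + 1 : ℕ) : ℤ_[ℓ]) * α t i)
          ∈ RingHom.ker (φ : ℤ_[ℓ] →+* ZMod (ℓ ^ r)) := h1
      rw [hφ, PadicInt.ker_toZModPow, Ideal.mem_span_singleton] at h2
      obtain ⟨c, hc⟩ := h2
      exact ⟨c, hc⟩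
    choose c hc using hA
    -- d is a unit in ℤ_[ℓ]
    have hdu : IsUnit ((d : ℕ) : ℤ_[ℓ]) := by
      rw [PadicInt.isUnit_iff]
      refine le_antisymm (PadicInt.norm_le_one _) ?_
      by_contra h
      push_neg at h
      have h3 : ‖(((d : ℤ)) : ℤ_[ℓ])‖ < 1 := by push_cast; exact h
      rw [PadicInt.norm_int_lt_one_iff_dvd] at h3
      exact hcop (Int.natCast_dvd_natCast.mp h3)
    set u : ℤ_[ℓ] := ↑hdu.unit⁻¹ with hu
    have hud : (d : ℤ_[ℓ]) * u = 1 := hdu.mul_val_inv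
    set B : Fin m → ℤ_[ℓ] := fun i => -(∑ t : Fin N, α t i) + u * c i with hB
    set b : ℕ → Fin m → ℤ_[ℓ] := fun j i =>
      (∑ t : Fin N, ((j - (t.1 + 1) : ℕ) : ℤ_[ℓ]) * α t i) + (j : ℤ_[ℓ]) * B i with hbdef
    have hb : ∀ j i, b j i
        = (∑ t : Fin N, ((j - (t.1 + 1) : ℕ) : ℤ_[ℓ]) * α t i) + (j : ℤ_[ℓ]) * B i :=
      fun j i => rfl
    have hb0 : ∀ i, b 0 i = 0 := by
      intro i; rw [hb]; simp
    have hbN1 : ∀ i, b (N + 1) i = 0 := by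
      intro i
      rw [hb]
      have hstep : ∀ t : Fin N, ((N + 1 - (t.1 + 1) : ℕ) : ℤ_[ℓ]) * α t i
          = ((N + 1 : ℕ) : ℤ_[ℓ]) * α t i - ((t.1 + 1 : ℕ) : ℤ_[ℓ]) * α t i := by
        intro t
        rw [Nat.cast_sub (by omega : t.1 + 1 ≤ N + 1)]
        ring
      rw [Finset.sum_congr rfl fun t _ => hstep t, Finset.sum_sub_distrib, hc i]
      have hcastN : ((N + 1 : ℕ) : ℤ_[ℓ]) = (d : ℤ_[ℓ]) * (ℓ : ℤ_[ℓ]) ^ r := by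
        rw [hN1]; push_cast; ring
      rw [hcastN, ← Finset.mul_sum, hB]
      have : (d : ℤ_[ℓ]) * (ℓ : ℤ_[ℓ]) ^ r * (u * c i)
          = ((d : ℤ_[ℓ]) * u) * ((ℓ : ℤ_[ℓ]) ^ r * c i) := by ring
      calc (d : ℤ_[ℓ]) * (ℓ:ℤ_[ℓ]) ^ r * (∑ t : Fin N, α t i) - (ℓ:ℤ_[ℓ]) ^ r * c i
            + (d : ℤ_[ℓ]) * (ℓ:ℤ_[ℓ]) ^ r * (-(∑ t : Fin N, α t i) + u * c i)
          = ((d : ℤ_[ℓ]) * u) * ((ℓ:ℤ_[ℓ]) ^ r * c i) - (ℓ:ℤ_[ℓ]) ^ r * c i := by ring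
        _ = 0 := by rw [hud]; ring
    -- the coefficient identity
    have coef : ∀ j k : ℕ, ((j - (k + 1) : ℕ) : ℤ_[ℓ]) - 2 * ((j + 1 - (k + 1) : ℕ) : ℤ_[ℓ])
        + ((j + 2 - (k + 1) : ℕ) : ℤ_[ℓ]) = if k = j then 1 else 0 := by
      intro j k
      rcases lt_trichotomy k j with h | h | h
      · rw [if_neg (by omega)]
        obtain ⟨a, rfl⟩ : ∃ a, j = k + 1 + a := ⟨j - (k + 1), by omega⟩
        rw [show k + 1 + a - (k + 1) = a from by omega,
          show k + 1 + a + 1 - (k + 1) = a + 1 from by omega,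
          show k + 1 + a + 2 - (k + 1) = a + 2 from by omega]
        push_cast; ring
      · subst h
        rw [if_pos rfl, show k - (k + 1) = 0 from by omega,
          show k + 1 - (k + 1) = 0 from by omega, show k + 2 - (k + 1) = 1 from by omega]
        push_cast; ring
      · rw [if_neg (by omega), show j - (k + 1) = 0 from by omega,
          show j + 1 - (k + 1) = 0 from by omega, show j + 2 - (k + 1) = 0 from by omega]
        push_cast; ring
    -- the preimage
    refine ⟨fun t => b (t.1 + 1), ?_⟩
    funext t
    rw [hΦ]
    have heβ : ∀ j, j ≤ N + 1 → e (fun s => b (s.1 + 1)) j = b j := by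
      intro j hj
      rw [he]
      by_cases h : 1 ≤ j ∧ j ≤ N
      · rw [dif_pos h]
        have h4 : j - 1 + 1 = j := by omega
        simp only [h4]
      · rw [dif_neg h]
        funext i
        rcases Nat.lt_or_ge j 1 with h1 | h1
        · have h5 : j = 0 := by omega
          rw [h5, hb0 i]; rfl
        · have h5 : j = N + 1 := by omega
          rw [h5, hbN1 i]; rfl
    have ht := t.2
    rw [heβ t.1 (by omega), heβ (t.1 + 1) (by omega), heβ (t.1 + 2) (by omega)]
    funext i
    have hexp : (b t.1 - 2 • b (t.1 + 1) + b (t.1 + 2)) i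
        = b t.1 i - 2 * b (t.1 + 1) i + b (t.1 + 2) i := by
      simp [two_smul, two_mul]
    rw [hexp, hb, hb, hb]
    have key : (∑ s : Fin N, ((t.1 - (s.1 + 1) : ℕ) : ℤ_[ℓ]) * α s i)
        - 2 * (∑ s : Fin N, ((t.1 + 1 - (s.1 + 1) : ℕ) : ℤ_[ℓ]) * α s i)
        + (∑ s : Fin N, ((t.1 + 2 - (s.1 + 1) : ℕ) : ℤ_[ℓ]) * α s i)
        = ∑ s : Fin N, (if s.1 = t.1 then (1 : ℤ_[ℓ]) else 0) * α s i := by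
      rw [Finset.mul_sum, ← Finset.sum_sub_distrib, ← Finset.sum_add_distrib]
      refine Finset.sum_congr rfl fun s _ => ?_
      have h6 := coef t.1 s.1
      calc ((t.1 - (s.1 + 1) : ℕ) : ℤ_[ℓ]) * α s i
            - 2 * (((t.1 + 1 - (s.1 + 1) : ℕ) : ℤ_[ℓ]) * α s i)
            + ((t.1 + 2 - (s.1 + 1) : ℕ) : ℤ_[ℓ]) * α s i
          = (((t.1 - (s.1 + 1) : ℕ) : ℤ_[ℓ]) - 2 * ((t.1 + 1 - (s.1 + 1) : ℕ) : ℤ_[ℓ])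
              + ((t.1 + 2 - (s.1 + 1) : ℕ) : ℤ_[ℓ])) * α s i := by ring
        _ = (if s.1 = t.1 then (1 : ℤ_[ℓ]) else 0) * α s i := by rw [h6]
    have hBcoef : ((t.1 : ℕ) : ℤ_[ℓ]) * B i - 2 * (((t.1 + 1 : ℕ) : ℤ_[ℓ]) * B i)
        + ((t.1 + 2 : ℕ) : ℤ_[ℓ]) * B i = 0 := by push_cast; ring
    have hfinal : ∑ s : Fin N, (if s.1 = t.1 then (1 : ℤ_[ℓ]) else 0) * α s i = α t i := by
      rw [Finset.sum_eq_single t]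
      · simp
      · intro s _ hs
        rw [if_neg (fun h => hs (Fin.ext h)), zero_mul]
      · intro h; exact absurd (Finset.mem_univ _) h
    calc (∑ s : Fin N, ((t.1 - (s.1 + 1) : ℕ) : ℤ_[ℓ]) * α s i) + ((t.1 : ℕ) : ℤ_[ℓ]) * B i
          - 2 * ((∑ s : Fin N, ((t.1 + 1 - (s.1 + 1) : ℕ) : ℤ_[ℓ]) * α s i)
              + ((t.1 + 1 : ℕ) : ℤ_[ℓ]) * B i)
          + ((∑ s : Fin N, ((t.1 + 2 - (s.1 + 1) : ℕ) : ℤ_[ℓ]) * α s i)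
              + ((t.1 + 2 : ℕ) : ℤ_[ℓ]) * B i)
        = ((∑ s : Fin N, ((t.1 - (s.1 + 1) : ℕ) : ℤ_[ℓ]) * α s i)
            - 2 * (∑ s : Fin N, ((t.1 + 1 - (s.1 + 1) : ℕ) : ℤ_[ℓ]) * α s i)
            + (∑ s : Fin N, ((t.1 + 2 - (s.1 + 1) : ℕ) : ℤ_[ℓ]) * α s i))
          + (((t.1 : ℕ) : ℤ_[ℓ]) * B i - 2 * (((t.1 + 1 : ℕ) : ℤ_[ℓ]) * B i)
            + ((t.1 + 2 : ℕ) : ℤ_[ℓ]) * B i) := by push_cast; ring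
      _ = α t i := by rw [key, hBcoef, hfinal, add_zero]
  -- assemble
  set Ψ := Submodule.liftQ (LinearMap.range Φ) π hrange with hΨ
  have hΨsurj : Function.Surjective Ψ := by
    intro y
    obtain ⟨x, hx⟩ := hsurjπ y
    exact ⟨Submodule.Quotient.mk x, hx⟩
  have hΨinj : Function.Injective Ψ := by
    rw [← LinearMap.ker_eq_bot]
    exact Submodule.ker_liftQ_eq_bot _ _ _ hker
  exact ⟨(LinearEquiv.ofBijective Ψ ⟨hΨinj, hΨsurj⟩).toAddEquiv⟩
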